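/- Let n ≥ 3. Consider n random lengths drawn independently and uniformly from [0,1], with increasing rearrangement X_(1) ≤ ⋯ ≤ X_(n). Then the probability that X_(1) + X_(2) + ⋯ + X_(n−1) < X_(n) (i.e., that no n-gon can be formed from the n sticks) equals 1/(n−1)!. -/

import Mathlib

open MeasureTheory Finset ENNReal

/-- `T k ℓ` : the `(k-1)`-bonacci sequence with initial terms
`T k ℓ 1 = ⋯ = T k ℓ (ℓ-1) = 0`, `T k ℓ ℓ = ⋯ = T k ℓ (k-1) = 1` and
recurrence `T k ℓ m = ∑_{p=1}^{k-1} T k ℓ (m-p)` for `m ≥ k`. -/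
def T (k ℓ : ℕ) : ℕ → ℕ
  | m =>
    if m < k then (if ℓ ≤ m then 1 else 0)
    else if h0 : m = 0 then 0
    else ∑ p ∈ (Finset.range (k - 1)).attach, T k ℓ (m - (↑p + 1))
  termination_by m => m
  decreasing_by omega

/-- `S k` : the `(k-1)`-bonacci sequence with `S k 1 = 1`, `S k i = 2^(i-2)` for
`2 ≤ i ≤ k-1`, and recurrence `S k m = ∑_{p=1}^{k-1} S k (m-p)` for `m ≥ k`. -/
def S (k : ℕ) : ℕ → ℕ
  | m =>
    if h0 : m = 0 then 0
    else if m = 1 then 1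
    else if m < k then 2 ^ (m - 2)
    else ∑ p ∈ (Finset.range (k - 1)).attach, S k (m - (↑p + 1))
  termination_by m => m
  decreasing_by omega

/-- No `k`-gon can be formed from the (increasingly sorted) stick lengths `y`:
for every window of `k` consecutive entries, i.e. every (0-indexed) `i` with
`i + (k-1) < n`, one has `y i + ⋯ + y (i+k-2) < y (i+k-1)`. -/
def NoPolygon (n k : ℕ) (y : Fin n → ℝ) : Prop :=
  ∀ i : ℕ, ∀ hi : i + (k - 1) < n,
    (∑ j : Fin (k - 1), y ⟨i + j, by have := j.isLt; omega⟩) < y ⟨i + (k - 1), hi⟩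

namespace PickupSticksAux

open Function

variable {n : ℕ}

lemma measurePreserving_compPerm (σ : Equiv.Perm (Fin n)) :
    MeasurePreserving (fun y : Fin n → ℝ => y ∘ σ) volume volume := by
  have h := volume_measurePreserving_piCongrLeft (fun _ : Fin n => ℝ) σ.symm
  have he : (fun y : Fin n → ℝ => y ∘ σ) =
      ⇑(MeasurableEquiv.piCongrLeft (fun _ : Fin n => ℝ) σ.symm) := by
    funext y
    rw [MeasurableEquiv.coe_piCongrLeft]
    funext i
    have h2 := Equiv.piCongrLeft_apply_apply (fun _ : Fin n => ℝ) σ.symm y (σ i)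
    simpa using h2.symm
  rwa [he]

lemma cube_eq : {y : Fin n → ℝ | ∀ i, y i ∈ Set.Icc (0:ℝ) 1} =
    Set.pi Set.univ (fun _ : Fin n => Set.Icc (0:ℝ) 1) := by
  ext y; simp only [Set.mem_setOf_eq, Set.mem_univ_pi]

lemma volume_cube : volume {y : Fin n → ℝ | ∀ i, y i ∈ Set.Icc (0:ℝ) 1} = 1 := by
  rw [cube_eq, volume_pi_pi]
  simp [Real.volume_Icc]

lemma measurableSet_cube : MeasurableSet {y : Fin n → ℝ | ∀ i, y i ∈ Set.Icc (0:ℝ) 1} := by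
  rw [cube_eq]; exact MeasurableSet.univ_pi fun _ => measurableSet_Icc

lemma volume_eqPlane {i j : Fin n} (h : i ≠ j) : volume {y : Fin n → ℝ | y i = y j} = 0 := by
  have hset : {y : Fin n → ℝ | y i = y j} =
      (LinearMap.ker ((LinearMap.proj i : (Fin n → ℝ) →ₗ[ℝ] ℝ) - LinearMap.proj j) :
        Set (Fin n → ℝ)) := by
    ext y
    simp [LinearMap.mem_ker, sub_eq_zero]
  rw [hset]
  apply Measure.addHaar_submodule
  intro htop
  have hmem : (Pi.single i (1:ℝ)) ∈
      LinearMap.ker ((LinearMap.proj i : (Fin n → ℝ) →ₗ[ℝ] ℝ) - LinearMap.proj j) := by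
    rw [htop]; exact Submodule.mem_top
  rw [LinearMap.mem_ker, LinearMap.sub_apply, LinearMap.proj_apply, LinearMap.proj_apply] at hmem
  rw [Pi.single_eq_same, Pi.single_eq_of_ne (Ne.symm h)] at hmem
  norm_num at hmem

lemma volume_zeroPlane (i : Fin n) : volume {y : Fin n → ℝ | y i = 0} = 0 := by
  have hset : {y : Fin n → ℝ | y i = 0} =
      (LinearMap.ker (LinearMap.proj i : (Fin n → ℝ) →ₗ[ℝ] ℝ) : Set (Fin n → ℝ)) := by
    ext y
    simp [LinearMap.mem_ker]
  rw [hset]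
  apply Measure.addHaar_submodule
  intro htop
  have hmem : (Pi.single i (1:ℝ)) ∈
      LinearMap.ker (LinearMap.proj i : (Fin n → ℝ) →ₗ[ℝ] ℝ) := by
    rw [htop]; exact Submodule.mem_top
  rw [LinearMap.mem_ker, LinearMap.proj_apply, Pi.single_eq_same] at hmem
  norm_num at hmem

lemma volume_nonInj : volume {y : Fin n → ℝ | ¬ Function.Injective y} = 0 := by
  refine measure_mono_null (t := ⋃ (p : Fin n × Fin n) (_ : p.1 ≠ p.2),
    {y : Fin n → ℝ | y p.1 = y p.2}) ?_ ?_
  · intro y hy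
    simp only [Set.mem_setOf_eq, Function.Injective, not_forall] at hy
    obtain ⟨a, b, hab, hne⟩ := hy
    exact Set.mem_iUnion.2 ⟨(a, b), Set.mem_iUnion.2 ⟨hne, hab⟩⟩
  · exact measure_iUnion_null fun p => measure_iUnion_null fun h => volume_eqPlane h

/-- Cube points whose `σ`-rearrangement is strictly decreasing. -/
def Dset (n : ℕ) (σ : Equiv.Perm (Fin n)) : Set (Fin n → ℝ) :=
  {y | (∀ i, y i ∈ Set.Icc (0:ℝ) 1) ∧ StrictAnti (y ∘ σ)}

lemma measurableSet_Dset (σ : Equiv.Perm (Fin n)) : MeasurableSet (Dset n σ) := by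
  have hset : Dset n σ = {y : Fin n → ℝ | ∀ i, y i ∈ Set.Icc (0:ℝ) 1} ∩
      ⋂ (p : Fin n × Fin n) (_ : p.1 < p.2), {y : Fin n → ℝ | y (σ p.2) < y (σ p.1)} := by
    ext y
    simp only [Dset, Set.mem_inter_iff, Set.mem_setOf_eq, Set.mem_iInter]
    exact and_congr Iff.rfl ⟨fun h p hp => h hp, fun h a b hab => h (a, b) hab⟩
  rw [hset]
  exact measurableSet_cube.inter <| MeasurableSet.iInter fun p => MeasurableSet.iInter fun _ =>
    measurableSet_lt (measurable_pi_apply _) (measurable_pi_apply _)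

lemma volume_Dset (σ : Equiv.Perm (Fin n)) : volume (Dset n σ) = volume (Dset n 1) := by
  have hpre : (fun y : Fin n → ℝ => y ∘ σ) ⁻¹' (Dset n 1) = Dset n σ := by
    ext y
    simp only [Dset, Set.mem_preimage, Set.mem_setOf_eq, Equiv.Perm.coe_one, Function.comp_id,
      Function.comp_apply]
    constructor
    · rintro ⟨h1, h2⟩
      exact ⟨fun i => by simpa using h1 (σ.symm i), h2⟩
    · rintro ⟨h1, h2⟩
      exact ⟨fun i => h1 (σ i), h2⟩
  rw [← hpre]
  exact (measurePreserving_compPerm σ).measure_preimage (measurableSet_Dset 1).nullMeasurableSet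

lemma strictMono_perm_eq_id (ρ : Equiv.Perm (Fin n)) (h : StrictMono ⇑ρ) : ∀ i, ρ i = i := by
  have key : ∀ f : Fin n → Fin n, StrictMono f → ∀ i, i ≤ f i := by
    intro f hf
    have : ∀ k : ℕ, ∀ i : Fin n, (i : ℕ) = k → i ≤ f i := by
      intro k
      induction k using Nat.strong_induction_on with
      | _ k IH =>
        intro i hik
        by_contra hc
        push_neg at hc
        have h1 : f i ≤ f (f i) := IH ((f i : Fin n) : ℕ) (by
          have := (Fin.lt_iff_val_lt_val).1 hc; omega) (f i) rfl
        have h2 : f (f i) < f i := hf hc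
        exact absurd h1 (not_le.2 h2)
    exact fun i => this (i : ℕ) i rfl
  have h2 : StrictMono ⇑ρ.symm := by
    intro a b hab
    rcases lt_or_ge (ρ.symm a) (ρ.symm b) with h' | h'
    · exact h'
    · exfalso
      have h3 := h.monotone h'
      simp only [Equiv.apply_symm_apply] at h3
      exact absurd hab (not_lt.2 h3)
  intro i
  have ha := key _ h i
  have hb := key _ h2 (ρ i)
  simp only [Equiv.symm_apply_apply] at hb
  exact le_antisymm hb ha

lemma disjoint_Dset : Pairwise (Function.onFun Disjoint (Dset n)) := by
  intro σ τ hne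
  rw [Function.onFun, Set.disjoint_left]
  intro y hyσ hyτ
  apply hne
  have hσ : StrictAnti (y ∘ σ) := hyσ.2
  have hτ : StrictAnti (y ∘ τ) := hyτ.2
  have hρ : StrictMono ⇑(σ.trans τ.symm) := by
    intro a b hab
    have h1 : y (σ b) < y (σ a) := hσ hab
    rcases lt_trichotomy ((σ.trans τ.symm) a) ((σ.trans τ.symm) b) with h | h | h
    · exact h
    · exfalso
      simp only [Equiv.trans_apply] at h
      have : σ a = σ b := τ.symm.injective h
      rw [this] at h1
      exact lt_irrefl _ h1
    · exfalso
      have h2 := hτ h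
      simp only [Equiv.trans_apply, Function.comp_apply, Equiv.apply_symm_apply] at h2
      exact lt_asymm h1 h2
  ext i
  have h3 := strictMono_perm_eq_id _ hρ i
  simp only [Equiv.trans_apply] at h3
  have h4 := (Equiv.symm_apply_eq τ).1 h3
  exact congrArg Fin.val h4

lemma volume_Dset_one : volume (Dset n 1) = ((n.factorial : ℝ≥0∞))⁻¹ := by
  classical
  have hunion : volume (⋃ σ : Equiv.Perm (Fin n), Dset n σ) =
      ∑' σ : Equiv.Perm (Fin n), volume (Dset n σ) :=
    measure_iUnion disjoint_Dset fun σ => measurableSet_Dset σ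
  have hsub : (⋃ σ : Equiv.Perm (Fin n), Dset n σ) ⊆ {y | ∀ i, y i ∈ Set.Icc (0:ℝ) 1} :=
    Set.iUnion_subset fun σ y hy => hy.1
  have hcover : {y : Fin n → ℝ | ∀ i, y i ∈ Set.Icc (0:ℝ) 1} ⊆
      (⋃ σ : Equiv.Perm (Fin n), Dset n σ) ∪ {y : Fin n → ℝ | ¬ Function.Injective y} := by
    intro y hy
    by_cases hinj : Function.Injective y
    · left
      refine Set.mem_iUnion.2 ⟨Fin.revPerm.trans (Tuple.sort y), hy, ?_⟩
      have hg : StrictMono (y ∘ Tuple.sort y) :=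
        (Tuple.monotone_sort y).strictMono_of_injective (hinj.comp (Equiv.injective _))
      intro a b hab
      simp only [Function.comp_apply, Equiv.coe_trans, Fin.revPerm_apply]
      exact hg (Fin.rev_lt_rev.2 hab)
    · right; exact hinj
  have hle : (1:ℝ≥0∞) ≤ volume (⋃ σ : Equiv.Perm (Fin n), Dset n σ) := by
    calc (1:ℝ≥0∞) = volume {y : Fin n → ℝ | ∀ i, y i ∈ Set.Icc (0:ℝ) 1} := volume_cube.symm
    _ ≤ volume ((⋃ σ : Equiv.Perm (Fin n), Dset n σ) ∪
        {y : Fin n → ℝ | ¬ Function.Injective y}) := measure_mono hcover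
    _ ≤ volume (⋃ σ : Equiv.Perm (Fin n), Dset n σ) +
        volume {y : Fin n → ℝ | ¬ Function.Injective y} := measure_union_le _ _
    _ = volume (⋃ σ : Equiv.Perm (Fin n), Dset n σ) := by rw [volume_nonInj, add_zero]
  have hge : volume (⋃ σ : Equiv.Perm (Fin n), Dset n σ) ≤ 1 :=
    volume_cube ▸ measure_mono hsub
  have h1 : volume (⋃ σ : Equiv.Perm (Fin n), Dset n σ) = 1 := le_antisymm hge hle
  rw [hunion] at h1
  have h2 : (n.factorial : ℝ≥0∞) * volume (Dset n 1) = 1 := by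
    rw [← h1, tsum_fintype,
      Finset.sum_congr rfl fun σ _ => volume_Dset σ, Finset.sum_const, Finset.card_univ,
      Fintype.card_perm, Fintype.card_fin, nsmul_eq_mul]
  have hne : (n.factorial : ℝ≥0∞) ≠ 0 := Nat.cast_ne_zero.2 n.factorial_ne_zero
  have hnt : (n.factorial : ℝ≥0∞) ≠ ⊤ := natCast_ne_top _
  calc volume (Dset n 1)
      = ((n.factorial : ℝ≥0∞)⁻¹ * n.factorial) * volume (Dset n 1) := by
        rw [ENNReal.inv_mul_cancel hne hnt, one_mul]
    _ = (n.factorial : ℝ≥0∞)⁻¹ * ((n.factorial : ℝ≥0∞) * volume (Dset n 1)) := mul_assoc _ _ _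
    _ = (n.factorial : ℝ≥0∞)⁻¹ := by rw [h2, mul_one]

/-- The triangular matrix of the change of variables. -/
def Lmat (m : ℕ) : Matrix (Fin (m+1)) (Fin (m+1)) ℝ :=
  Matrix.of fun i j => Fin.cases (if j = 0 then (1:ℝ) else 0)
    (fun k => (if j = k.castSucc then (1:ℝ) else 0) + (if j = k.succ then (-1:ℝ) else 0)) i

lemma Lmat_apply_zero (m : ℕ) (y : Fin (m+1) → ℝ) :
    Matrix.toLin' (Lmat m) y 0 = y 0 := by
  simp [Lmat, Matrix.toLin'_apply, Matrix.mulVec, dotProduct, ite_mul,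
    Finset.sum_ite_eq']

lemma Lmat_apply_succ (m : ℕ) (y : Fin (m+1) → ℝ) (k : Fin m) :
    Matrix.toLin' (Lmat m) y k.succ = y k.castSucc - y k.succ := by
  simp [Lmat, Matrix.toLin'_apply, Matrix.mulVec, dotProduct, add_mul, ite_mul,
    Finset.sum_add_distrib, Finset.sum_ite_eq', sub_eq_add_neg]

lemma measurePreserving_Lmat (m : ℕ) :
    MeasurePreserving (⇑(Matrix.toLin' (Lmat m)) : (Fin (m+1) → ℝ) → (Fin (m+1) → ℝ))
      volume volume := by
  have htri : (Lmat m).BlockTriangular OrderDual.toDual := by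
    intro i j hij
    have hij' : i < j := hij
    induction i using Fin.cases with
    | zero =>
      simp [Lmat, hij'.ne']
    | succ k =>
      have h1 : j ≠ k.castSucc := by
        intro h
        rw [h] at hij'
        exact absurd hij' (not_lt.2 (Fin.castSucc_lt_succ : k.castSucc < k.succ).le)
      have h2 : j ≠ k.succ := fun h => by rw [h] at hij'; exact lt_irrefl _ hij'
      simp [Lmat, h1, h2]
  have hdiag : ∀ i : Fin (m+1), Lmat m i i = Fin.cases (1:ℝ) (fun _ => -1) i := by
    intro i
    induction i using Fin.cases with
    | zero => simp [Lmat]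
    | succ k => simp [Lmat, (Fin.castSucc_lt_succ : k.castSucc < k.succ).ne']
  have habs : |Matrix.det (Lmat m)| = 1 := by
    rw [Matrix.det_of_lowerTriangular _ htri, Finset.abs_prod]
    rw [Finset.prod_congr rfl fun i _ => by rw [hdiag i]]
    have : ∀ i : Fin (m+1), |(Fin.cases (1:ℝ) (fun _ => -1) i : ℝ)| = 1 := by
      intro i
      induction i using Fin.cases with
      | zero => simp
      | succ k => simp
    rw [Finset.prod_congr rfl fun i _ => this i]
    simp
  have hdet : LinearMap.det (Matrix.toLin' (Lmat m)) = Matrix.det (Lmat m) :=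
    LinearMap.det_toLin' _
  have hne : LinearMap.det (Matrix.toLin' (Lmat m)) ≠ 0 := by
    rw [hdet]
    intro h
    rw [h] at habs
    norm_num at habs
  refine ⟨(Matrix.toLin' (Lmat m)).continuous_of_finiteDimensional.measurable, ?_⟩
  rw [Real.map_linearMap_volume_pi_eq_smul_volume_pi hne, hdet, abs_inv, habs]
  norm_num

lemma telescope (m : ℕ) (y : Fin (m+1) → ℝ) :
    ∑ k : Fin m, (y k.castSucc - y k.succ) = y 0 - y (Fin.last m) := by
  set u : ℕ → ℝ := fun k => y ⟨min k m, by omega⟩ with hu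
  have h1 : ∀ k : Fin m, y k.castSucc - y k.succ = u ↑k - u (↑k + 1) := by
    intro k
    have hk := k.isLt
    have e1 : (⟨min ↑k m, by omega⟩ : Fin (m+1)) = k.castSucc := by
      apply Fin.ext; show min ↑k m = ↑k; omega
    have e2 : (⟨min (↑k + 1) m, by omega⟩ : Fin (m+1)) = k.succ := by
      apply Fin.ext; show min ((k:ℕ) + 1) m = (k:ℕ) + 1; omega
    simp only [hu]
    rw [e1, e2]
  rw [Finset.sum_congr rfl fun k _ => h1 k]
  rw [Fin.sum_univ_eq_sum_range (fun k => u k - u (k + 1)) m]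
  rw [Finset.sum_range_sub' u m]
  have e0 : u 0 = y 0 := by
    simp only [hu]
    congr 1
  have em : u m = y (Fin.last m) := by
    simp only [hu]
    congr 1
    apply Fin.ext; simp [Fin.val_last]
  rw [e0, em]

lemma sum_compl_zero (m : ℕ) (g : Fin (m+1) → ℝ) :
    ∑ j ∈ univ \ {(0 : Fin (m+1))}, g j = (∑ j, g j) - g 0 := by
  rw [Finset.sum_sdiff_eq_sub (Finset.subset_univ _), Finset.sum_singleton]

lemma volume_E0 (m : ℕ) :
    volume {x : Fin (m+1) → ℝ | (∀ i, x i ∈ Set.Icc (0:ℝ) 1) ∧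
      ∑ j ∈ univ \ {(0 : Fin (m+1))}, x j < x 0} = (((m+1).factorial : ℝ≥0∞))⁻¹ := by
  classical
  set V : Set (Fin (m+1) → ℝ) := {x | (∀ i, x i ∈ Set.Icc (0:ℝ) 1) ∧
      ∑ j ∈ univ \ {(0 : Fin (m+1))}, x j < x 0} with hVdef
  have hVmeas : MeasurableSet V := by
    have hV2 : V = {x : Fin (m+1) → ℝ | ∀ i, x i ∈ Set.Icc (0:ℝ) 1} ∩
        {x : Fin (m+1) → ℝ | ∑ j ∈ univ \ {(0 : Fin (m+1))}, x j < x 0} := rfl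
    rw [hV2]
    exact measurableSet_cube.inter (measurableSet_lt
      (Finset.measurable_sum _ fun j _ => measurable_pi_apply j) (measurable_pi_apply 0))
  set f := Matrix.toLin' (Lmat m) with hf
  have hsum : ∀ y : Fin (m+1) → ℝ,
      ∑ j ∈ univ \ {(0 : Fin (m+1))}, f y j = y 0 - y (Fin.last m) := by
    intro y
    calc ∑ j ∈ univ \ {(0 : Fin (m+1))}, f y j
        = (∑ j, f y j) - f y 0 := sum_compl_zero m (fun j => f y j)
      _ = (f y 0 + ∑ k : Fin m, f y (Fin.succ k)) - f y 0 := by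
          rw [Fin.sum_univ_succ (fun j => f y j)]
      _ = ∑ k : Fin m, (y k.castSucc - y k.succ) := by
          rw [Finset.sum_congr rfl fun k _ => Lmat_apply_succ m y k]; ring
      _ = y 0 - y (Fin.last m) := telescope m y
  set W : Set (Fin (m+1) → ℝ) := {y | y 0 ≤ 1 ∧ (∀ k : Fin m, y k.succ ≤ y k.castSucc) ∧
      0 < y (Fin.last m)} with hWdef
  have hpre : f ⁻¹' V = W := by
    ext y
    simp only [hVdef, hWdef, Set.mem_preimage, Set.mem_setOf_eq, Set.mem_Icc]
    rw [hsum y, Lmat_apply_zero]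
    constructor
    · rintro ⟨hcube, hlt⟩
      refine ⟨?_, ?_, by linarith⟩
      · have h := (hcube 0).2
        rwa [Lmat_apply_zero] at h
      · intro k
        have h := (hcube k.succ).1
        rw [Lmat_apply_succ] at h
        linarith
    · rintro ⟨h1, h2, h3⟩
      have hanti : Antitone y := Fin.antitone_iff_succ_le.2 h2
      have hub : ∀ i, y i ≤ y 0 := fun i => hanti (Fin.zero_le i)
      have hlb : ∀ i, y (Fin.last m) ≤ y i := fun i => hanti (Fin.le_last i)
      refine ⟨?_, by linarith⟩
      intro i
      induction i using Fin.cases with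
      | zero =>
        rw [Lmat_apply_zero]
        exact ⟨by linarith [hlb 0], h1⟩
      | succ k =>
        rw [Lmat_apply_succ]
        constructor
        · linarith [h2 k]
        · linarith [hub k.castSucc, hlb k.succ]
  have hWD : volume W = volume (Dset (m+1) 1) := by
    apply measure_congr
    rw [MeasureTheory.ae_eq_set]
    constructor
    · refine measure_mono_null
        (t := ⋃ k : Fin m, {y : Fin (m+1) → ℝ | y k.castSucc = y k.succ}) ?_
        (measure_iUnion_null fun k => volume_eqPlane (Fin.castSucc_lt_succ : k.castSucc < k.succ).ne)
      rintro y ⟨⟨h1, h2, h3⟩, hnd⟩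
      have hanti : Antitone y := Fin.antitone_iff_succ_le.2 h2
      have hub : ∀ i, y i ≤ y 0 := fun i => hanti (Fin.zero_le i)
      have hlb : ∀ i, y (Fin.last m) ≤ y i := fun i => hanti (Fin.le_last i)
      have hcube : ∀ i, y i ∈ Set.Icc (0:ℝ) 1 :=
        fun i => ⟨by linarith [hlb i], by linarith [hub i]⟩
      have hns : ¬ StrictAnti y := by
        intro hs
        exact hnd ⟨hcube, by simpa [Equiv.Perm.coe_one] using hs⟩
      rw [Fin.strictAnti_iff_succ_lt] at hns
      push_neg at hns
      obtain ⟨k, hk⟩ := hns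
      exact Set.mem_iUnion.2 ⟨k, le_antisymm hk (h2 k)⟩
    · refine measure_mono_null (t := {y : Fin (m+1) → ℝ | y (Fin.last m) = 0}) ?_
        (volume_zeroPlane _)
      rintro y ⟨⟨hcube, hs⟩, hnw⟩
      have hs' : StrictAnti y := by simpa [Equiv.Perm.coe_one] using hs
      by_contra hne
      apply hnw
      refine ⟨(hcube 0).2, fun k => (hs' (Fin.castSucc_lt_succ : k.castSucc < k.succ)).le, ?_⟩
      exact lt_of_le_of_ne (hcube (Fin.last m)).1 (Ne.symm hne)
  have h1 : volume V = volume W := by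
    rw [← hpre]
    exact ((measurePreserving_Lmat m).measure_preimage hVmeas.nullMeasurableSet).symm
  rw [h1, hWD, volume_Dset_one]

end PickupSticksAux

/-- For `n ≥ 3`, the probability that the `n` sticks cannot form an `n`-gon, i.e. that
`X_(1) + ⋯ + X_(n-1) < X_(n)` for the order statistics, equals `1/(n-1)!`. -/
theorem pickup_sticks_no_ngon_prob (n : ℕ) (hn : 3 ≤ n) :
    volume {x : Fin n → ℝ | (∀ i, x i ∈ Set.Icc (0 : ℝ) 1) ∧
        (∑ j : Fin (n - 1), (x ∘ Tuple.sort x) ⟨j, by have := j.isLt; omega⟩) <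
          (x ∘ Tuple.sort x) ⟨n - 1, by omega⟩} =
      1 / ((n - 1).factorial : ℝ≥0∞) := by
  classical
  obtain ⟨m, rfl⟩ : ∃ m, n = m + 1 := ⟨n - 1, by omega⟩
  simp only [Nat.add_sub_cancel]
  set Ei : Fin (m+1) → Set (Fin (m+1) → ℝ) := fun i =>
    {x | (∀ j, x j ∈ Set.Icc (0:ℝ) 1) ∧ ∑ j ∈ Finset.univ \ {i}, x j < x i} with hEi
  have hmeas : ∀ i, MeasurableSet (Ei i) := fun i =>
    PickupSticksAux.measurableSet_cube.inter (measurableSet_lt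
      (Finset.measurable_sum _ fun j _ => measurable_pi_apply j) (measurable_pi_apply i))
  have hEq : {x : Fin (m+1) → ℝ | (∀ i, x i ∈ Set.Icc (0 : ℝ) 1) ∧
      (∑ j : Fin (m + 1 - 1), (x ∘ Tuple.sort x)
          ⟨(j : ℕ), lt_of_lt_of_le j.isLt (by omega)⟩) <
        (x ∘ Tuple.sort x) ⟨m, Nat.lt_succ_self m⟩} = ⋃ i, Ei i := by
    ext x
    simp only [Set.mem_setOf_eq, Set.mem_iUnion, hEi]
    set σ := Tuple.sort x with hσ
    have hmono : Monotone (x ∘ σ) := Tuple.monotone_sort x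
    have htot : ∑ j : Fin (m+1), x (σ j) = ∑ j, x j := Equiv.sum_comp σ x
    have hsplit : ∑ j : Fin (m+1), x (σ j) =
        (∑ j : Fin m, x (σ j.castSucc)) + x (σ (Fin.last m)) :=
      Fin.sum_univ_castSucc (fun j => x (σ j))
    have hS : (∑ j : Fin (m + 1 - 1), (x ∘ ⇑σ)
          ⟨(j : ℕ), lt_of_lt_of_le j.isLt (by omega)⟩)
        = ∑ j : Fin m, x (σ j.castSucc) :=
      Finset.sum_congr rfl fun j _ => rfl
    have hlast : (x ∘ ⇑σ) (⟨m, Nat.lt_succ_self m⟩ : Fin (m+1)) = x (σ (Fin.last m)) := rfl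
    rw [hS, hlast]
    have hkey : (∑ j : Fin m, x (σ j.castSucc)) = (∑ j, x j) - x (σ (Fin.last m)) := by
      linarith [hsplit, htot]
    rw [hkey]
    have hmax : ∀ j, x j ≤ x (σ (Fin.last m)) := by
      intro j
      have h1 : (x ∘ σ) (σ.symm j) ≤ (x ∘ σ) (Fin.last m) := hmono (Fin.le_last _)
      simpa using h1
    constructor
    · rintro ⟨hcube, hlt⟩
      refine ⟨σ (Fin.last m), hcube, ?_⟩
      have hsub : ∑ j ∈ Finset.univ \ {σ (Fin.last m)}, x j
          = (∑ j, x j) - x (σ (Fin.last m)) := by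
        rw [Finset.sum_sdiff_eq_sub (Finset.subset_univ _), Finset.sum_singleton]
      rw [hsub]
      exact hlt
    · rintro ⟨i, hcube, hi⟩
      refine ⟨hcube, ?_⟩
      have hnn : ∀ j, 0 ≤ x j := fun j => (hcube j).1
      have hsub : ∑ j ∈ Finset.univ \ {i}, x j = (∑ j, x j) - x i := by
        rw [Finset.sum_sdiff_eq_sub (Finset.subset_univ _), Finset.sum_singleton]
      by_cases hio : σ (Fin.last m) = i
      · rw [hio]
        rw [hsub] at hi
        exact hi
      · exfalso
        have hmem : σ (Fin.last m) ∈ Finset.univ \ {i} := by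
          simp [Finset.mem_sdiff, hio]
        have h4 := Finset.single_le_sum (f := x) (fun j _ => hnn j) hmem
        have h5 := hmax i
        linarith
  rw [hEq]
  have hdisj : Pairwise (Function.onFun Disjoint Ei) := by
    intro a b hab
    rw [Function.onFun, Set.disjoint_left]
    rintro x ⟨hcube, ha⟩ ⟨_, hb⟩
    have hnn : ∀ j, 0 ≤ x j := fun j => (hcube j).1
    have h1 : x a ≤ ∑ j ∈ Finset.univ \ {b}, x j :=
      Finset.single_le_sum (fun j _ => hnn j) (by simp [hab])
    have h2 : x b ≤ ∑ j ∈ Finset.univ \ {a}, x j :=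
      Finset.single_le_sum (fun j _ => hnn j) (by simp [Ne.symm hab])
    linarith
  rw [measure_iUnion hdisj hmeas, tsum_fintype]
  have hvol : ∀ i, volume (Ei i) = volume (Ei 0) := by
    intro i
    have hpre : (fun y : Fin (m+1) → ℝ => y ∘ (Equiv.swap (0 : Fin (m+1)) i)) ⁻¹' (Ei 0)
        = Ei i := by
      ext y
      simp only [hEi, Set.mem_preimage, Set.mem_setOf_eq, Function.comp_apply]
      have hst : ∀ j : Fin (m+1), j ∈ Finset.univ \ ({0} : Finset (Fin (m+1))) ↔
          (Equiv.swap (0 : Fin (m+1)) i) j ∈ Finset.univ \ {i} := by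
        intro j
        simp only [Finset.mem_sdiff, Finset.mem_univ, true_and, Finset.mem_singleton]
        constructor
        · intro hj hc
          apply hj
          rw [Equiv.apply_eq_iff_eq_symm_apply, Equiv.symm_swap, Equiv.swap_apply_right] at hc
          exact hc
        · intro hj hc
          apply hj
          rw [hc]
          exact Equiv.swap_apply_left 0 i
      have hsum : ∑ j ∈ Finset.univ \ ({0} : Finset (Fin (m+1))),
          y ((Equiv.swap (0 : Fin (m+1)) i) j) = ∑ j ∈ Finset.univ \ {i}, y j :=
        Finset.sum_equiv (Equiv.swap (0 : Fin (m+1)) i) hst (fun j _ => rfl)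
      rw [hsum, Equiv.swap_apply_left]
      constructor
      · rintro ⟨h1, h2⟩
        refine ⟨fun j => ?_, h2⟩
        have := h1 ((Equiv.swap (0 : Fin (m+1)) i) j)
        rwa [Equiv.swap_apply_self] at this
      · rintro ⟨h1, h2⟩
        exact ⟨fun j => h1 _, h2⟩
    rw [← hpre]
    exact (PickupSticksAux.measurePreserving_compPerm
      (Equiv.swap (0 : Fin (m+1)) i)).measure_preimage (hmeas 0).nullMeasurableSet
  rw [Finset.sum_congr rfl fun i _ => hvol i, Finset.sum_const, Finset.card_univ,
    Fintype.card_fin, nsmul_eq_mul]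
  have hE0 : volume (Ei 0) = (((m+1).factorial : ℝ≥0∞))⁻¹ := PickupSticksAux.volume_E0 m
  rw [hE0, Nat.factorial_succ, Nat.cast_mul]
  have hne : ((m+1 : ℕ) : ℝ≥0∞) ≠ 0 := Nat.cast_ne_zero.2 (Nat.succ_ne_zero m)
  have hnt : ((m+1 : ℕ) : ℝ≥0∞) ≠ ⊤ := natCast_ne_top _
  rw [ENNReal.mul_inv (Or.inl hne) (Or.inl hnt), ← mul_assoc]
  rw [ENNReal.mul_inv_cancel hne hnt, one_mul, one_div]
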